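/- Let 0 < s < 1, let N > 2s be an integer, let ν ∈ ℝ^N be a unit vector and λ ∈ ℝ, and write Σ = {x ∈ ℝ^N : x·ν < λ} and x_λ^ν = x + 2(λ - x·ν)ν for the reflection across the hyperplane {x·ν = λ}. Let u, v : ℝ^N → ℝ be measurable functions such that u - v is odd with respect to the hyperplane, i.e. (u-v)(x_λ^ν) = -(u-v)(x) for a.e. x ∈ ℝ^N. Define w(x) = max{u(x)-v(x),0} for x ∈ Σ and w(x) = 0 for x ∈ ℝ^N∖Σ, and assume that both double integrals below are finite. Then ∫_{ℝ^N}∫_{ℝ^N} ((u(x)-v(x)) - (u(y)-v(y)))(w(x)-w(y)) / |x-y|^{N+2s} dx dy ≥ ∫_{ℝ^N}∫_{ℝ^N} (w(x)-w(y))² / |x-y|^{N+2s} dx dy. -/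

import Mathlib

open MeasureTheory Set Bornology

noncomputable section

abbrev Euc (N : ℕ) := EuclideanSpace ℝ (Fin N)

/-- The normalizing constant `c_{N,s}` of the fractional Laplacian. -/
noncomputable def cNs (N : ℕ) [NeZero N] (s : ℝ) : ℝ :=
  (∫ ξ : Euc N, (1 - Real.cos (ξ 0)) / ‖ξ‖ ^ ((N : ℝ) + 2 * s))⁻¹

/-- The fractional bilinear (Gagliardo) form. -/
noncomputable def fracForm (N : ℕ) (s : ℝ) (u v : Euc N → ℝ) : ℝ :=
  ∫ p : Euc N × Euc N, (u p.1 - u p.2) * (v p.1 - v p.2) / ‖p.1 - p.2‖ ^ ((N : ℝ) + 2 * s)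

/-- Membership in `H^s(ℝ^N)`. -/
def MemHs (N : ℕ) (s : ℝ) (u : Euc N → ℝ) : Prop :=
  MemLp u 2 (volume : Measure (Euc N)) ∧
    Integrable (fun p : Euc N × Euc N =>
      (u p.1 - u p.2) ^ 2 / ‖p.1 - p.2‖ ^ ((N : ℝ) + 2 * s))

/-- Membership in `H^s_0(Ω)`. -/
def MemHs0 (N : ℕ) (s : ℝ) (Ω : Set (Euc N)) (u : Euc N → ℝ) : Prop :=
  MemHs N s u ∧ ∀ᵐ x : Euc N, x ∉ Ω → u x = 0

/-- Weak solution of `(-Δ)^s u = h(x,u)` in `Ω`, `u = 0` outside `Ω`. -/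
def IsWeakSol (N : ℕ) [NeZero N] (s : ℝ) (Ω : Set (Euc N))
    (h : Euc N → ℝ → ℝ) (u : Euc N → ℝ) : Prop :=
  MemHs0 N s Ω u ∧ IntegrableOn (fun x => h x (u x)) Ω ∧
    ∀ φ : Euc N → ℝ, MemHs0 N s Ω φ → (∃ C, ∀ x, |φ x| ≤ C) →
      cNs N s / 2 * fracForm N s u φ = ∫ x in Ω, h x (u x) * φ x

/-- Hypothesis (H1) for `f` alone: Carathéodory and locally Lipschitz in `t`. -/
def HypH1f (N : ℕ) (Ω : Set (Euc N)) (f : Euc N → ℝ → ℝ) : Prop :=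
  (∀ t : ℝ, Measurable fun x => f x t) ∧
  (∀ M > 0, ∃ L ≥ 0, ∀ x ∈ Ω, ∀ t₁ ∈ Icc (0:ℝ) M, ∀ t₂ ∈ Icc (0:ℝ) M,
      |f x t₁ - f x t₂| ≤ L * |t₁ - t₂|)

/-- Hypothesis (H1). -/
def HypH1 (N : ℕ) (Ω : Set (Euc N)) (f : Euc N → ℝ → ℝ) (g : ℝ → ℝ) : Prop :=
  HypH1f N Ω f ∧
  (∀ M > 0, ∃ L ≥ 0, ∀ t₁ ∈ Icc (0:ℝ) M, ∀ t₂ ∈ Icc (0:ℝ) M,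
      |g t₁ - g t₂| ≤ L * |t₁ - t₂|)

/-- Hypothesis (H2): local Hölder continuity in `x` away from the origin. -/
def HypH2 (N : ℕ) (Ω : Set (Euc N)) (f : Euc N → ℝ → ℝ) : Prop :=
  ∀ M > 0, ∀ r > 0, ∃ γ ∈ Ioo (0:ℝ) 1, ∃ C > 0,
    ∀ x₁ ∈ Ω \ Metric.ball 0 r, ∀ x₂ ∈ Ω \ Metric.ball 0 r, ∀ t ∈ Icc (0:ℝ) M,
      |f x₁ t - f x₂ t| ≤ C * ‖x₁ - x₂‖ ^ γ

/-- Reflection across the hyperplane `{x : x·ν = λ}`. -/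
noncomputable def reflHyp (N : ℕ) (ν : Euc N) (lam : ℝ) (x : Euc N) : Euc N :=
  x + (2 * (lam - (inner ℝ x ν : ℝ))) • ν

/-- Half space `Σ_λ^ν`. -/
def halfSp (N : ℕ) (ν : Euc N) (lam : ℝ) : Set (Euc N) :=
  {x | (inner ℝ x ν : ℝ) < lam}

/-- Convexity of `Ω` in the direction `ν`. -/
def ConvexDir (N : ℕ) (ν : Euc N) (Ω : Set (Euc N)) : Prop :=
  ∀ x ∈ Ω, ∀ t : ℝ, x + t • ν ∈ Ω → ∀ r : ℝ, 0 ≤ r → r ≤ t → x + r • ν ∈ Ω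

/-- The first coordinate direction. -/
noncomputable def e1 (N : ℕ) [NeZero N] : Euc N := EuclideanSpace.single 0 1

/-- Reflection `(x₁,x') ↦ (2λ - x₁, x')`. -/
noncomputable def reflX1 (N : ℕ) [NeZero N] (lam : ℝ) (x : Euc N) : Euc N :=
  WithLp.toLp 2 (fun i => if i = 0 then 2 * lam - x 0 else x i)

/-- `a(ν) = inf_{x ∈ Ω} x·ν`. -/
noncomputable def aDir (N : ℕ) (ν : Euc N) (Ω : Set (Euc N)) : ℝ :=
  sInf ((fun x => (inner ℝ x ν : ℝ)) '' Ω)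

/-- `λ₁(ν)`. -/
noncomputable def lam1 (N : ℕ) (ν : Euc N) (Ω : Set (Euc N)) : ℝ :=
  sSup {lam | aDir N ν Ω < lam ∧ (reflHyp N ν lam) '' (Ω ∩ halfSp N ν lam) ⊆ Ω}

/-- `λ₁⁰(ν) = min {0, λ₁(ν)}`. -/
noncomputable def lam10 (N : ℕ) (ν : Euc N) (Ω : Set (Euc N)) : ℝ :=
  min 0 (lam1 N ν Ω)

/-- Sup norm on a set. -/
noncomputable def supNormOn (N : ℕ) (K : Set (Euc N)) (v : Euc N → ℝ) : ℝ :=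
  sSup ((fun x => |v x|) '' K)

/-- Hölder norm of order `β` (with `⌊β⌋` derivatives) on a set `K`. -/
noncomputable def holderNormOn (N : ℕ) (β : ℝ) (K : Set (Euc N)) (v : Euc N → ℝ) : ℝ :=
  (∑ j ∈ Finset.range (⌊β⌋₊ + 1),
      sSup ((fun x => ‖iteratedFDerivWithin ℝ j v K x‖) '' K)) +
    sSup {c : ℝ | ∃ x ∈ K, ∃ y ∈ K, x ≠ y ∧
      c = ‖iteratedFDerivWithin ℝ ⌊β⌋₊ v K x - iteratedFDerivWithin ℝ ⌊β⌋₊ v K y‖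
            / ‖x - y‖ ^ (β - (⌊β⌋₊ : ℝ))}

/-- The tail norm `‖u‖_{L^s(ℝ^N)}`. -/
noncomputable def tailNorm (N : ℕ) (s : ℝ) (v : Euc N → ℝ) : ℝ :=
  ∫ x : Euc N, |v x| / (1 + ‖x‖ ^ ((N : ℝ) + 2 * s))


namespace Stmt14Aux

variable {N : ℕ} {ν : Euc N} {lam : ℝ}

lemma inner_nu_nu (hν : ‖ν‖ = 1) : (inner ℝ ν ν : ℝ) = 1 := by
  rw [real_inner_self_eq_norm_mul_norm, hν, mul_one]

lemma inner_reflHyp (hν : ‖ν‖ = 1) (x : Euc N) :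
    (inner ℝ (reflHyp N ν lam x) ν : ℝ) = 2 * lam - (inner ℝ x ν : ℝ) := by
  simp only [reflHyp, inner_add_left, real_inner_smul_left, inner_nu_nu hν]
  ring

lemma reflHyp_invol (hν : ‖ν‖ = 1) (x : Euc N) :
    reflHyp N ν lam (reflHyp N ν lam x) = x := by
  have h := inner_reflHyp (lam := lam) hν x
  simp only [reflHyp] at h ⊢
  rw [h]
  module

lemma norm_sub_smul_sq (hν : ‖ν‖ = 1) (z : Euc N) (t : ℝ) :
    ‖z - t • ν‖ ^ 2 = ‖z‖ ^ 2 - 2 * (t * (inner ℝ z ν : ℝ)) + t ^ 2 := by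
  rw [norm_sub_sq_real, real_inner_smul_right, norm_smul, Real.norm_eq_abs, mul_pow, sq_abs, hν]
  ring

lemma norm_aux (hν : ‖ν‖ = 1) (z : Euc N) :
    ‖z - (2 * (inner ℝ z ν : ℝ)) • ν‖ = ‖z‖ := by
  have hsq : ‖z - (2 * (inner ℝ z ν : ℝ)) • ν‖ ^ 2 = ‖z‖ ^ 2 := by
    rw [norm_sub_smul_sq hν]
    ring
  have := congrArg Real.sqrt hsq
  rwa [Real.sqrt_sq (norm_nonneg _), Real.sqrt_sq (norm_nonneg _)] at this

lemma norm_reflHyp_sub (hν : ‖ν‖ = 1) (x y : Euc N) :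
    ‖reflHyp N ν lam x - reflHyp N ν lam y‖ = ‖x - y‖ := by
  have h : reflHyp N ν lam x - reflHyp N ν lam y
      = (x - y) - (2 * (inner ℝ (x - y) ν : ℝ)) • ν := by
    simp only [reflHyp, inner_sub_left]
    module
  rw [h, norm_aux hν]

lemma norm_le_reflHyp (hν : ‖ν‖ = 1) {x y : Euc N}
    (hx : (inner ℝ x ν : ℝ) < lam) (hy : (inner ℝ y ν : ℝ) < lam) :
    ‖x - y‖ ≤ ‖x - reflHyp N ν lam y‖ := by
  have h : x - reflHyp N ν lam y = (x - y) - (2 * (lam - (inner ℝ y ν : ℝ))) • ν := by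
    simp only [reflHyp]
    module
  have hsq : ‖x - y‖ ^ 2 ≤ ‖x - reflHyp N ν lam y‖ ^ 2 := by
    rw [h, norm_sub_smul_sq hν, inner_sub_left]
    nlinarith [hx, hy]
  have := Real.sqrt_le_sqrt hsq
  rwa [Real.sqrt_sq (norm_nonneg _), Real.sqrt_sq (norm_nonneg _)] at this

/-- The linear reflection as a linear isometry equivalence. -/
noncomputable def reflLIE (ν : Euc N) (hν : ‖ν‖ = 1) : Euc N ≃ₗᵢ[ℝ] Euc N where
  toFun x := x - (2 * (inner ℝ x ν : ℝ)) • ν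
  invFun x := x - (2 * (inner ℝ x ν : ℝ)) • ν
  map_add' x y := by
    simp only [inner_add_left]
    module
  map_smul' r x := by
    simp only [real_inner_smul_left, RingHom.id_apply]
    module
  left_inv x := by
    simp only [inner_sub_left, real_inner_smul_left, inner_nu_nu hν]
    module
  right_inv x := by
    simp only [inner_sub_left, real_inner_smul_left, inner_nu_nu hν]
    module
  norm_map' x := norm_aux hν x

lemma measurePreserving_reflHyp (hν : ‖ν‖ = 1) (lam : ℝ) :
    MeasurePreserving (reflHyp N ν lam) volume volume := by
  have h : reflHyp N ν lam = (fun z => z + (2 * lam) • ν) ∘ (reflLIE ν hν) := by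
    funext x
    show reflHyp N ν lam x = (x - (2 * (inner ℝ x ν : ℝ)) • ν) + (2 * lam) • ν
    simp only [reflHyp]
    module
  rw [h]
  exact (measurePreserving_add_right volume _).comp (reflLIE ν hν).measurePreserving

lemma continuous_reflHyp (ν : Euc N) (lam : ℝ) : Continuous (reflHyp N ν lam) := by
  unfold reflHyp
  exact continuous_id.add
    ((continuous_const.mul (continuous_const.sub (continuous_id.inner (𝕜 := ℝ) continuous_const))).smul
      continuous_const)

/-- Reflection as a homeomorphism. -/
noncomputable def reflHomeo (ν : Euc N) (hν : ‖ν‖ = 1) (lam : ℝ) : Euc N ≃ₜ Euc N where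
  toFun := reflHyp N ν lam
  invFun := reflHyp N ν lam
  left_inv := reflHyp_invol hν
  right_inv := reflHyp_invol hν
  continuous_toFun := continuous_reflHyp ν lam
  continuous_invFun := continuous_reflHyp ν lam

lemma ae_inner_ne (hν : ‖ν‖ = 1) (lam : ℝ) :
    ∀ᵐ x : Euc N, (inner ℝ x ν : ℝ) ≠ lam := by
  have hsub : volume (((ℝ ∙ ν)ᗮ : Submodule ℝ (Euc N)) : Set (Euc N)) = 0 := by
    apply Measure.addHaar_submodule
    intro h
    have hmem : ν ∈ (ℝ ∙ ν)ᗮ := h ▸ Submodule.mem_top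
    rw [Submodule.mem_orthogonal_singleton_iff_inner_right] at hmem
    rw [inner_nu_nu hν] at hmem
    norm_num at hmem
  have hset : {x : Euc N | (inner ℝ x ν : ℝ) = lam}
      = (fun x => x + (-lam) • ν) ⁻¹' (((ℝ ∙ ν)ᗮ : Submodule ℝ (Euc N)) : Set (Euc N)) := by
    ext x
    simp only [mem_setOf_eq, mem_preimage, SetLike.mem_coe,
      Submodule.mem_orthogonal_singleton_iff_inner_right, inner_add_right, real_inner_smul_right]
    rw [real_inner_comm ν x, inner_nu_nu hν]
    constructor
    · intro h; rw [h]; ring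
    · intro h; linarith
  rw [ae_iff]
  have : {x : Euc N | ¬ (inner ℝ x ν : ℝ) ≠ lam} = {x : Euc N | (inner ℝ x ν : ℝ) = lam} := by
    ext x; simp
  rw [this, hset, measure_preimage_add_right, hsub]

lemma ae_prod_fst {α β : Type*} [MeasureSpace α] [MeasureSpace β]
    [SFinite (volume : Measure β)]
    {p : α → Prop} (h : ∀ᵐ x : α, p x) : ∀ᵐ z : α × β, p z.1 := by
  rw [Measure.volume_eq_prod]
  exact Measure.quasiMeasurePreserving_fst.tendsto_ae.eventually h

lemma ae_prod_snd {α β : Type*} [MeasureSpace α] [MeasureSpace β]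
    [SFinite (volume : Measure β)]
    {p : β → Prop} (h : ∀ᵐ x : β, p x) : ∀ᵐ z : α × β, p z.2 := by
  rw [Measure.volume_eq_prod]
  exact Measure.quasiMeasurePreserving_snd.tendsto_ae.eventually h


lemma key_base {κ : ℝ} (hν : ‖ν‖ = 1) (hκ : 0 < κ) (φ w : Euc N → ℝ)
    (hw : ∀ x, w x = if (inner ℝ x ν : ℝ) < lam then max (φ x) 0 else 0)
    {x y : Euc N}
    (hxo : φ (reflHyp N ν lam x) = -φ x) (hyo : φ (reflHyp N ν lam y) = -φ y)
    (hx : (inner ℝ x ν : ℝ) < lam) (hy : (inner ℝ y ν : ℝ) < lam) :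
    0 ≤ ((φ x - φ y) * (w x - w y) - (w x - w y) ^ 2) / ‖x - y‖ ^ κ
      + ((φ (reflHyp N ν lam x) - φ y) * (w (reflHyp N ν lam x) - w y)
          - (w (reflHyp N ν lam x) - w y) ^ 2) / ‖reflHyp N ν lam x - y‖ ^ κ
      + ((φ x - φ (reflHyp N ν lam y)) * (w x - w (reflHyp N ν lam y))
          - (w x - w (reflHyp N ν lam y)) ^ 2) / ‖x - reflHyp N ν lam y‖ ^ κ
      + ((φ (reflHyp N ν lam x) - φ (reflHyp N ν lam y))
          * (w (reflHyp N ν lam x) - w (reflHyp N ν lam y))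
          - (w (reflHyp N ν lam x) - w (reflHyp N ν lam y)) ^ 2)
          / ‖reflHyp N ν lam x - reflHyp N ν lam y‖ ^ κ := by
  have hwx : w x = max (φ x) 0 := by rw [hw x, if_pos hx]
  have hwy : w y = max (φ y) 0 := by rw [hw y, if_pos hy]
  have hcx : ¬ ((inner ℝ (reflHyp N ν lam x) ν : ℝ) < lam) := by
    rw [inner_reflHyp hν]; linarith
  have hcy : ¬ ((inner ℝ (reflHyp N ν lam y) ν : ℝ) < lam) := by
    rw [inner_reflHyp hν]; linarith
  have hwRx : w (reflHyp N ν lam x) = 0 := by rw [hw _, if_neg hcx]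
  have hwRy : w (reflHyp N ν lam y) = 0 := by rw [hw _, if_neg hcy]
  have hnRR : ‖reflHyp N ν lam x - reflHyp N ν lam y‖ = ‖x - y‖ := norm_reflHyp_sub hν x y
  have hnRxy : ‖reflHyp N ν lam x - y‖ = ‖x - reflHyp N ν lam y‖ := by
    conv_lhs => rw [← reflHyp_invol (lam := lam) hν y]
    rw [norm_reflHyp_sub hν]
  have hle : ‖x - y‖ ≤ ‖x - reflHyp N ν lam y‖ := norm_le_reflHyp hν hx hy
  have hxRy : x ≠ reflHyp N ν lam y := by
    intro h
    rw [← h] at hcy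
    exact hcy hx
  have hd2pos : 0 < ‖x - reflHyp N ν lam y‖ ^ κ :=
    Real.rpow_pos_of_pos (norm_sub_pos_iff.mpr hxRy) κ
  have hdle : ‖x - y‖ ^ κ ≤ ‖x - reflHyp N ν lam y‖ ^ κ :=
    Real.rpow_le_rpow (norm_nonneg _) hle hκ.le
  rw [hwx, hwy, hwRx, hwRy, hxo, hyo, hnRR, hnRxy]
  set a := φ x with ha
  set b := φ y with hb
  set p := max a 0 with hp
  set q := max b 0 with hq
  set d1 := ‖x - y‖ ^ κ with hd1
  set d2 := ‖x - reflHyp N ν lam y‖ ^ κ with hd2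
  have hap : a ≤ p := le_max_left _ _
  have hp0 : (0:ℝ) ≤ p := le_max_right _ _
  have hbq : b ≤ q := le_max_left _ _
  have hq0 : (0:ℝ) ≤ q := le_max_right _ _
  have hpa : p * (p - a) = 0 := by
    rcases le_total a 0 with h | h
    · rw [hp, max_eq_right h]; ring
    · rw [hp, max_eq_left h]; ring
  have hqb : q * (q - b) = 0 := by
    rcases le_total b 0 with h | h
    · rw [hq, max_eq_right h]; ring
    · rw [hq, max_eq_left h]; ring
  have hn1 : 0 ≤ (a - b) * (p - q) - (p - q) ^ 2 := by
    nlinarith [mul_nonneg hp0 (sub_nonneg.2 hbq), mul_nonneg hq0 (sub_nonneg.2 hap), hpa, hqb]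
  have hstep : ((a - b) * (p - q) - (p - q) ^ 2) / d2
      ≤ ((a - b) * (p - q) - (p - q) ^ 2) / d1 := by
    by_cases hxy : x = y
    · have hab : a = b := by rw [ha, hb, hxy]
      have hpq : p = q := by rw [hp, hq, hab]
      rw [hab, hpq]
      simp
    · have hd1pos : 0 < d1 := by
        rw [hd1]; exact Real.rpow_pos_of_pos (norm_sub_pos_iff.mpr hxy) κ
      rw [div_le_div_iff₀ hd2pos hd1pos]
      exact mul_le_mul_of_nonneg_left hdle hn1
  have h23 : ((-a - b) * (0 - q) - (0 - q) ^ 2) + ((a - -b) * (p - 0) - (p - 0) ^ 2)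
      = 2 * p * q - ((a - b) * (p - q) - (p - q) ^ 2) := by
    linear_combination (-2 : ℝ) * hpa + (-2 : ℝ) * hqb
  have htot : 0 ≤ ((a - b) * (p - q) - (p - q) ^ 2) / d1
      + (((-a - b) * (0 - q) - (0 - q) ^ 2) + ((a - -b) * (p - 0) - (p - 0) ^ 2)) / d2 := by
    have h2pq : 0 ≤ 2 * p * q / d2 := div_nonneg (by positivity) hd2pos.le
    have heq : (((-a - b) * (0 - q) - (0 - q) ^ 2) + ((a - -b) * (p - 0) - (p - 0) ^ 2)) / d2
        = 2 * p * q / d2 - ((a - b) * (p - q) - (p - q) ^ 2) / d2 := by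
      rw [h23, sub_div]
    linarith [hstep]
  refine le_trans htot (le_of_eq ?_)
  ring

lemma key_pointwise {κ : ℝ} (hν : ‖ν‖ = 1) (hκ : 0 < κ) (φ w : Euc N → ℝ)
    (hw : ∀ x, w x = if (inner ℝ x ν : ℝ) < lam then max (φ x) 0 else 0)
    {x y : Euc N}
    (hxo : φ (reflHyp N ν lam x) = -φ x) (hyo : φ (reflHyp N ν lam y) = -φ y)
    (hxs : (inner ℝ x ν : ℝ) ≠ lam) (hys : (inner ℝ y ν : ℝ) ≠ lam) :
    0 ≤ ((φ x - φ y) * (w x - w y) - (w x - w y) ^ 2) / ‖x - y‖ ^ κ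
      + ((φ (reflHyp N ν lam x) - φ y) * (w (reflHyp N ν lam x) - w y)
          - (w (reflHyp N ν lam x) - w y) ^ 2) / ‖reflHyp N ν lam x - y‖ ^ κ
      + ((φ x - φ (reflHyp N ν lam y)) * (w x - w (reflHyp N ν lam y))
          - (w x - w (reflHyp N ν lam y)) ^ 2) / ‖x - reflHyp N ν lam y‖ ^ κ
      + ((φ (reflHyp N ν lam x) - φ (reflHyp N ν lam y))
          * (w (reflHyp N ν lam x) - w (reflHyp N ν lam y))
          - (w (reflHyp N ν lam x) - w (reflHyp N ν lam y)) ^ 2)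
          / ‖reflHyp N ν lam x - reflHyp N ν lam y‖ ^ κ := by
  have hRR := reflHyp_invol (N := N) (ν := ν) (lam := lam) hν
  rcases lt_or_gt_of_ne hxs with hx | hx <;> rcases lt_or_gt_of_ne hys with hy | hy
  · exact key_base hν hκ φ w hw hxo hyo hx hy
  · have hyo' : φ (reflHyp N ν lam (reflHyp N ν lam y)) = -φ (reflHyp N ν lam y) := by
      rw [hRR, hyo, neg_neg]
    have hy' : (inner ℝ (reflHyp N ν lam y) ν : ℝ) < lam := by
      rw [inner_reflHyp hν]; linarith
    have h := key_base hν hκ φ w hw (x := x) (y := reflHyp N ν lam y) hxo hyo' hx hy'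
    rw [hRR] at h
    linarith
  · have hxo' : φ (reflHyp N ν lam (reflHyp N ν lam x)) = -φ (reflHyp N ν lam x) := by
      rw [hRR, hxo, neg_neg]
    have hx' : (inner ℝ (reflHyp N ν lam x) ν : ℝ) < lam := by
      rw [inner_reflHyp hν]; linarith
    have h := key_base hν hκ φ w hw (x := reflHyp N ν lam x) (y := y) hxo' hyo hx' hy
    rw [hRR] at h
    linarith
  · have hxo' : φ (reflHyp N ν lam (reflHyp N ν lam x)) = -φ (reflHyp N ν lam x) := by
      rw [hRR, hxo, neg_neg]
    have hx' : (inner ℝ (reflHyp N ν lam x) ν : ℝ) < lam := by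
      rw [inner_reflHyp hν]; linarith
    have hyo' : φ (reflHyp N ν lam (reflHyp N ν lam y)) = -φ (reflHyp N ν lam y) := by
      rw [hRR, hyo, neg_neg]
    have hy' : (inner ℝ (reflHyp N ν lam y) ν : ℝ) < lam := by
      rw [inner_reflHyp hν]; linarith
    have h := key_base hν hκ φ w hw (x := reflHyp N ν lam x) (y := reflHyp N ν lam y)
      hxo' hyo' hx' hy'
    rw [hRR, hRR] at h
    linarith

end Stmt14Aux

/-- the key decomposition inequality in the weak comparison
principle: with `w = (u-v)⁺ 𝟙_Σ` and `u - v` odd with respect to the hyperplane,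
the Gagliardo form of `u - v` against `w` dominates the Gagliardo seminorm of `w`. -/
theorem stmt14 (N : ℕ) (s : ℝ) (hs0 : 0 < s) (hs1 : s < 1) (hN : 2 * s < N)
    (ν : Euc N) (hν : ‖ν‖ = 1) (lam : ℝ)
    (u v w : Euc N → ℝ) (hu : Measurable u) (hv : Measurable v)
    (hodd : ∀ᵐ x : Euc N, u (reflHyp N ν lam x) - v (reflHyp N ν lam x) = -(u x - v x))
    (hw : ∀ x : Euc N, w x = if (inner ℝ x ν : ℝ) < lam then max (u x - v x) 0 else 0)
    (h1 : Integrable (fun p : Euc N × Euc N =>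
      ((u p.1 - v p.1) - (u p.2 - v p.2)) * (w p.1 - w p.2) / ‖p.1 - p.2‖ ^ ((N : ℝ) + 2 * s)))
    (h2 : Integrable (fun p : Euc N × Euc N =>
      (w p.1 - w p.2) ^ 2 / ‖p.1 - p.2‖ ^ ((N : ℝ) + 2 * s))) :
    (∫ p : Euc N × Euc N, (w p.1 - w p.2) ^ 2 / ‖p.1 - p.2‖ ^ ((N : ℝ) + 2 * s)) ≤
      ∫ p : Euc N × Euc N,
        ((u p.1 - v p.1) - (u p.2 - v p.2)) * (w p.1 - w p.2) / ‖p.1 - p.2‖ ^ ((N : ℝ) + 2 * s) := by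
  have hκ : (0:ℝ) < (N : ℝ) + 2 * s := by
    have : (0:ℝ) ≤ N := Nat.cast_nonneg N
    linarith
  set F : Euc N × Euc N → ℝ := fun p =>
    (((u p.1 - v p.1) - (u p.2 - v p.2)) * (w p.1 - w p.2) - (w p.1 - w p.2) ^ 2)
      / ‖p.1 - p.2‖ ^ ((N : ℝ) + 2 * s) with hFdef
  have hFint : Integrable F := by
    apply (h1.sub h2).congr
    filter_upwards with p
    exact div_sub_div_same _ _ _
  have hmp : MeasurePreserving (reflHyp N ν lam) volume volume :=
    Stmt14Aux.measurePreserving_reflHyp hν lam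
  have hme : MeasurableEmbedding (reflHyp N ν lam) :=
    (Stmt14Aux.reflHomeo ν hν lam).measurableEmbedding
  have hmpid : MeasurePreserving (id : Euc N → Euc N) volume volume := MeasurePreserving.id _
  have hmeid : MeasurableEmbedding (id : Euc N → Euc N) := MeasurableEmbedding.id
  have hmap1 : (Prod.map (reflHyp N ν lam) (id : Euc N → Euc N))
      = fun p : Euc N × Euc N => (reflHyp N ν lam p.1, p.2) := by
    funext p; cases p; rfl
  have hmap2 : (Prod.map (id : Euc N → Euc N) (reflHyp N ν lam))
      = fun p : Euc N × Euc N => (p.1, reflHyp N ν lam p.2) := by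
    funext p; cases p; rfl
  have hmap3 : (Prod.map (reflHyp N ν lam) (reflHyp N ν lam))
      = fun p : Euc N × Euc N => (reflHyp N ν lam p.1, reflHyp N ν lam p.2) := by
    funext p; cases p; rfl
  have hmp1 : MeasurePreserving (fun p : Euc N × Euc N => (reflHyp N ν lam p.1, p.2))
      volume volume := by
    rw [Measure.volume_eq_prod, ← hmap1]
    exact hmp.prod hmpid
  have hmp2 : MeasurePreserving (fun p : Euc N × Euc N => (p.1, reflHyp N ν lam p.2))
      volume volume := by
    rw [Measure.volume_eq_prod, ← hmap2]
    exact hmpid.prod hmp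
  have hmp3 : MeasurePreserving
      (fun p : Euc N × Euc N => (reflHyp N ν lam p.1, reflHyp N ν lam p.2)) volume volume := by
    rw [Measure.volume_eq_prod, ← hmap3]
    exact hmp.prod hmp
  have hme1 : MeasurableEmbedding (fun p : Euc N × Euc N => (reflHyp N ν lam p.1, p.2)) :=
    hme.prodMap hmeid
  have hme2 : MeasurableEmbedding (fun p : Euc N × Euc N => (p.1, reflHyp N ν lam p.2)) :=
    hmeid.prodMap hme
  have hme3 : MeasurableEmbedding
      (fun p : Euc N × Euc N => (reflHyp N ν lam p.1, reflHyp N ν lam p.2)) :=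
    hme.prodMap hme
  have i1 : Integrable (fun p : Euc N × Euc N => F (reflHyp N ν lam p.1, p.2)) :=
    (hmp1.integrable_comp_emb hme1).2 hFint
  have i2 : Integrable (fun p : Euc N × Euc N => F (p.1, reflHyp N ν lam p.2)) :=
    (hmp2.integrable_comp_emb hme2).2 hFint
  have i3 : Integrable (fun p : Euc N × Euc N => F (reflHyp N ν lam p.1, reflHyp N ν lam p.2)) :=
    (hmp3.integrable_comp_emb hme3).2 hFint
  have e1 : ∫ p : Euc N × Euc N, F (reflHyp N ν lam p.1, p.2) = ∫ p, F p :=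
    hmp1.integral_comp hme1 F
  have e2 : ∫ p : Euc N × Euc N, F (p.1, reflHyp N ν lam p.2) = ∫ p, F p :=
    hmp2.integral_comp hme2 F
  have e3 : ∫ p : Euc N × Euc N, F (reflHyp N ν lam p.1, reflHyp N ν lam p.2) = ∫ p, F p :=
    hmp3.integral_comp hme3 F
  have iA : Integrable (fun p : Euc N × Euc N => F p + F (reflHyp N ν lam p.1, p.2)) :=
    hFint.add i1
  have iB : Integrable (fun p : Euc N × Euc N =>
      F p + F (reflHyp N ν lam p.1, p.2) + F (p.1, reflHyp N ν lam p.2)) := iA.add i2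
  have e0 : ∫ p : Euc N × Euc N,
      (F p + F (reflHyp N ν lam p.1, p.2) + F (p.1, reflHyp N ν lam p.2)
        + F (reflHyp N ν lam p.1, reflHyp N ν lam p.2))
      = (∫ p : Euc N × Euc N, F p) + (∫ p : Euc N × Euc N, F (reflHyp N ν lam p.1, p.2))
        + (∫ p : Euc N × Euc N, F (p.1, reflHyp N ν lam p.2))
        + ∫ p : Euc N × Euc N, F (reflHyp N ν lam p.1, reflHyp N ν lam p.2) := by
    rw [integral_add iB i3, integral_add iA i2, integral_add hFint i1]
  have hG : (0:ℝ) ≤ ∫ p : Euc N × Euc N,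
      (F p + F (reflHyp N ν lam p.1, p.2) + F (p.1, reflHyp N ν lam p.2)
        + F (reflHyp N ν lam p.1, reflHyp N ν lam p.2)) := by
    apply integral_nonneg_of_ae
    have hcond := hodd.and (Stmt14Aux.ae_inner_ne hν lam)
    filter_upwards [Stmt14Aux.ae_prod_fst (β := Euc N) hcond,
      Stmt14Aux.ae_prod_snd (α := Euc N) hcond] with p hp1 hp2
    simp only [hFdef, Pi.zero_apply]
    exact Stmt14Aux.key_pointwise hν hκ (fun z => u z - v z) w hw hp1.1 hp2.1 hp1.2 hp2.2
  have hFnn : (0:ℝ) ≤ ∫ p : Euc N × Euc N, F p := by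
    rw [e0, e1, e2, e3] at hG
    linarith
  have hsplit : ∫ p : Euc N × Euc N, F p
      = (∫ p : Euc N × Euc N,
          ((u p.1 - v p.1) - (u p.2 - v p.2)) * (w p.1 - w p.2)
            / ‖p.1 - p.2‖ ^ ((N : ℝ) + 2 * s))
        - ∫ p : Euc N × Euc N, (w p.1 - w p.2) ^ 2 / ‖p.1 - p.2‖ ^ ((N : ℝ) + 2 * s) := by
    rw [← integral_sub h1 h2]
    apply integral_congr_ae
    filter_upwards with p
    rw [hFdef]
    exact (div_sub_div_same _ _ _).symm
  linarith [hsplit, hFnn]
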